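/- arXiv:2303.11832 — 3 statements merged into one kernel-verified Lean document; each statement's English description precedes it below -/
import Mathlib

section
/- Let H be a Hilbert space and (x_n) a bounded sequence in H. If for every positive integer h the Cesàro averages (1/N)∑_{n=1}^N ⟨x_{n+h}, x_n⟩ tend to 0 as N → ∞, then ‖(1/N)∑_{n=1}^N x_n‖ tends to 0 as N → ∞. -/
set_option maxHeartbeats 1000000


open Filter Finset

lemma cesaro_shift (f : ℕ → ℂ) (k : ℕ)
    (hf : Tendsto (fun N : ℕ => (1/(N:ℂ)) * ∑ n ∈ range N, f n) atTop (nhds 0)) :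
    Tendsto (fun N : ℕ => (1/(N:ℂ)) * ∑ n ∈ range N, f (n+k)) atTop (nhds 0) := by
  have key : ∀ N : ℕ, (1/(N:ℂ)) * ∑ n ∈ range N, f (n+k)
      = (((k+N : ℕ):ℂ)/(N:ℂ)) * ((1/((k+N : ℕ):ℂ)) * ∑ n ∈ range (k+N), f n)
        - (1/(N:ℂ)) * ∑ n ∈ range k, f n := by
    intro N
    rcases Nat.eq_zero_or_pos N with rfl | hN
    · simp
    have hN0 : (N:ℂ) ≠ 0 := Nat.cast_ne_zero.mpr hN.ne'
    have hkN : ((k+N : ℕ):ℂ) ≠ 0 := Nat.cast_ne_zero.mpr (by omega)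
    have hsum : ∑ n ∈ range N, f (n+k) = (∑ n ∈ range (k+N), f n) - ∑ n ∈ range k, f n := by
      rw [Finset.sum_range_add, add_sub_cancel_left]
      exact Finset.sum_congr rfl (fun n _ => by rw [add_comm])
    rw [hsum]
    have hkN' : (k:ℂ)+(N:ℂ) ≠ 0 := by push_cast at hkN; exact hkN
    have hne : (k:ℂ)*(N:ℂ) + (N:ℂ)^2 ≠ 0 := by
      intro h; apply mul_ne_zero hkN' hN0; linear_combination h
    push_cast
    field_simp
  simp only [key]
  have h1 : Tendsto (fun N : ℕ => ((k+N : ℕ):ℂ)/(N:ℂ)) atTop (nhds 1) := by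
    have : ∀ N : ℕ, ((k+N : ℕ):ℂ)/(N:ℂ) = (k:ℂ) * (1/(N:ℂ)) + (N:ℂ)/(N:ℂ) := by
      intro N; push_cast; ring
    simp only [this]
    have hinv : Tendsto (fun N : ℕ => 1/(N:ℂ)) atTop (nhds 0) := by
      rw [tendsto_zero_iff_norm_tendsto_zero]
      simpa [one_div] using tendsto_one_div_atTop_nhds_zero_nat (𝕜 := ℝ)
    have hdd : Tendsto (fun N : ℕ => (N:ℂ)/(N:ℂ)) atTop (nhds 1) := by
      apply Tendsto.congr' _ tendsto_const_nhds
      filter_upwards [eventually_ne_atTop 0] with N hN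
      rw [div_self (Nat.cast_ne_zero.mpr hN)]
    simpa using (hinv.const_mul (k:ℂ)).add hdd
  have h2 : Tendsto (fun N : ℕ => (1/((k+N:ℕ):ℂ)) * ∑ n ∈ range (k+N), f n) atTop (nhds 0) :=
    hf.comp (by simpa [add_comm] using tendsto_add_atTop_nat k)
  have h3 : Tendsto (fun N : ℕ => (1/(N:ℂ)) * ∑ n ∈ range k, f n) atTop (nhds 0) := by
    have hinv : Tendsto (fun N : ℕ => 1/(N:ℂ)) atTop (nhds 0) := by
      rw [tendsto_zero_iff_norm_tendsto_zero]
      simpa [one_div] using tendsto_one_div_atTop_nhds_zero_nat (𝕜 := ℝ)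
    simpa using hinv.mul_const (∑ n ∈ range k, f n)
  simpa using (h1.mul h2).sub h3

lemma corr_pair {H : Type*} [NormedAddCommGroup H] [InnerProductSpace ℂ H]
    (x : ℕ → H)
    (hcorr : ∀ h : ℕ, 0 < h →
      Tendsto (fun N : ℕ =>
          (1 / (N : ℂ)) * ∑ n ∈ Finset.range N, (inner ℂ (x (n + 1 + h)) (x (n + 1)) : ℂ))
        atTop (nhds 0))
    (d d' : ℕ) (hne : d ≠ d') :
    Tendsto (fun N : ℕ =>
        (1 / (N : ℂ)) * ∑ n ∈ range N, (inner ℂ (x (n + 1 + d)) (x (n + 1 + d')) : ℂ))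
      atTop (nhds 0) := by
  have aux : ∀ a b : ℕ, b < a → Tendsto (fun N : ℕ =>
      (1 / (N : ℂ)) * ∑ n ∈ range N, (inner ℂ (x (n + 1 + a)) (x (n + 1 + b)) : ℂ))
      atTop (nhds 0) := by
    intro a b hlt
    have h1 := cesaro_shift (fun m => (inner ℂ (x (m + 1 + (a - b))) (x (m + 1)) : ℂ)) b
      (hcorr (a - b) (by omega))
    apply h1.congr
    intro N
    congr 1
    apply Finset.sum_congr rfl
    intro n _
    show (inner ℂ (x (n + b + 1 + (a - b))) (x (n + b + 1)) : ℂ) = _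
    rw [show n + b + 1 + (a - b) = n + 1 + a from by omega,
        show n + b + 1 = n + 1 + b from by omega]
  rcases Nat.lt_or_ge d' d with hlt | hge
  · exact aux d d' hlt
  · have hlt : d < d' := by omega
    have h2 := (aux d' d hlt).star
    simp only [star_zero] at h2
    apply h2.congr
    intro N
    rw [star_mul']
    congr 1
    · simp [star_div₀, Complex.star_def, Complex.conj_natCast]
    · rw [star_sum]
      exact Finset.sum_congr rfl fun n _ => inner_conj_symm _ _

/-- van der Corput's difference theorem, version (i). -/
theorem vdc_i {H : Type*} [NormedAddCommGroup H] [InnerProductSpace ℂ H]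
    (x : ℕ → H) (hbdd : ∃ C : ℝ, ∀ n, ‖x n‖ ≤ C)
    (hcorr : ∀ h : ℕ, 0 < h →
      Tendsto (fun N : ℕ =>
          (1 / (N : ℂ)) * ∑ n ∈ Finset.range N, (inner ℂ (x (n + 1 + h)) (x (n + 1)) : ℂ))
        atTop (nhds 0)) :
    Tendsto (fun N : ℕ => ‖(1 / (N : ℝ)) • ∑ n ∈ Finset.range N, x (n + 1)‖)
      atTop (nhds 0) := by
  obtain ⟨C₀, hC₀⟩ := hbdd
  set C : ℝ := max C₀ 1 with hCdef
  have hC : ∀ n, ‖x n‖ ≤ C := fun n => (hC₀ n).trans (le_max_left _ _)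
  have hC1 : (1:ℝ) ≤ C := le_max_right _ _
  have hCpos : (0:ℝ) < C := lt_of_lt_of_le one_pos hC1
  rw [Metric.tendsto_atTop]
  intro ε hε
  set ε' : ℝ := ε / 2 with hε'def
  have hε' : 0 < ε' := by positivity
  set D : ℕ := ⌈(4*C^2)/ε'^2⌉₊ with hDdef
  have hD1 : 1 ≤ D := by
    rw [hDdef]
    exact Nat.one_le_iff_ne_zero.mpr (Nat.ceil_pos.mpr (by positivity)).ne'
  have hDpos : (0:ℝ) < (D:ℝ) := by exact_mod_cast hD1
  have hDle : C^2 / (D:ℝ) ≤ ε'^2/4 := by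
    have h1 : (4*C^2)/ε'^2 ≤ (D:ℝ) := Nat.le_ceil _
    rw [div_le_div_iff₀ hDpos (by norm_num)]
    have := (div_le_iff₀ (by positivity : (0:ℝ) < ε'^2)).mp h1
    nlinarith
  set δ : ℝ := ε'^2/4 with hδdef
  have hδpos : 0 < δ := by positivity
  have hoffall : ∀ᶠ (N : ℕ) in atTop, ∀ p ∈ (range D ×ˢ range D), p.1 ≠ p.2 →
      ‖(1/(N:ℂ)) * ∑ n ∈ range N, (inner ℂ (x (n + 1 + p.1)) (x (n + 1 + p.2)) : ℂ)‖ < δ := by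
    rw [eventually_all_finset]
    intro p _
    by_cases hne : p.1 = p.2
    · exact Eventually.of_forall fun N h => absurd hne h
    · have h0 := (corr_pair x hcorr p.1 p.2 hne).norm
      simp only [norm_zero] at h0
      exact (h0.eventually_lt_const hδpos).mono fun N hN _ => hN
  have hsmall : ∀ᶠ (N : ℕ) in atTop, 2*(D:ℝ)*C/(N:ℝ) < ε'/4 :=
    (tendsto_const_div_atTop_nhds_zero_nat (2*(D:ℝ)*C)).eventually_lt_const (by positivity)
  have hfinal : ∀ᶠ (N : ℕ) in atTop,
      dist ‖(1 / (N : ℝ)) • ∑ n ∈ Finset.range N, x (n + 1)‖ 0 < ε := by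
    filter_upwards [hoffall, hsmall, eventually_ge_atTop 1] with N hoffN hsmallN hN1
    have hNpos : (0:ℝ) < (N:ℝ) := by exact_mod_cast hN1
    have hN0 : (N:ℝ) ≠ 0 := hNpos.ne'
    have hD0 : (D:ℝ) ≠ 0 := hDpos.ne'
    set S : H := ∑ n ∈ range N, x (n+1) with hSdef
    set T : ℕ → H := fun d => ∑ n ∈ range N, x (n+1+d) with hTdef
    set Y : ℕ → H := fun n => ∑ d ∈ range D, x (n+1+d) with hYdef
    set b : H := ((N:ℝ)*(D:ℝ))⁻¹ • ∑ n ∈ range N, Y n with hbdef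
    -- Step A : distance between the two averages
    have hTd : ∀ d ∈ range D, ‖S - T d‖ ≤ 2*(D:ℝ)*C := by
      intro d hd
      have hdD : d ≤ D := le_of_lt (mem_range.mp hd)
      have e1 : ∑ n ∈ range (d+N), x (n+1) =
          (∑ n ∈ range d, x (n+1)) + ∑ n ∈ range N, x (d+n+1) :=
        Finset.sum_range_add (fun n => x (n+1)) d N
      have e2 : ∑ n ∈ range (N+d), x (n+1) =
          S + ∑ n ∈ range d, x (N+n+1) :=
        Finset.sum_range_add (fun n => x (n+1)) N d
      have e3 : ∑ n ∈ range N, x (d+n+1) = T d := by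
        simp only [hTdef]
        exact Finset.sum_congr rfl fun n _ => by rw [show d+n+1 = n+1+d from by omega]
      have e5 : (∑ n ∈ range d, x (n+1)) + T d = S + ∑ n ∈ range d, x (N+n+1) := by
        rw [← e3, ← e1, ← e2, show d+N = N+d from by omega]
      have e4 : S - T d = (∑ n ∈ range d, x (n+1)) - ∑ n ∈ range d, x (N+n+1) := by
        rw [sub_eq_sub_iff_add_eq_add]
        exact e5.symm
      rw [e4]
      have h5 : ‖(∑ n ∈ range d, x (n+1)) - ∑ n ∈ range d, x (N+n+1)‖ ≤
          (∑ n ∈ range d, ‖x (n+1)‖) + ∑ n ∈ range d, ‖x (N+n+1)‖ :=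
        (norm_sub_le _ _).trans (add_le_add (norm_sum_le _ _) (norm_sum_le _ _))
      refine h5.trans ?_
      have h6 : (∑ n ∈ range d, ‖x (N+n+1)‖) ≤ d * C := by
        calc (∑ n ∈ range d, ‖x (N+n+1)‖) ≤ ∑ _n ∈ range d, C :=
              Finset.sum_le_sum fun n _ => hC _
          _ = d * C := by rw [Finset.sum_const, card_range, nsmul_eq_mul]
      have h7 : (∑ n ∈ range d, ‖x (n+1)‖) ≤ d * C := by
        calc (∑ n ∈ range d, ‖x (n+1)‖) ≤ ∑ _n ∈ range d, C :=
              Finset.sum_le_sum fun n _ => hC _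
          _ = d * C := by rw [Finset.sum_const, card_range, nsmul_eq_mul]
      have hdC : (d:ℝ) * C ≤ (D:ℝ) * C := by
        apply mul_le_mul_of_nonneg_right _ hCpos.le
        exact_mod_cast hdD
      linarith
    have hab : ‖(1 / (N:ℝ)) • S - b‖ ≤ 2*(D:ℝ)*C/(N:ℝ) := by
      have key : (1 / (N:ℝ)) • S - b = ((N:ℝ)*(D:ℝ))⁻¹ • ∑ d ∈ range D, (S - T d) := by
        rw [hbdef]
        have e1 : ∑ n ∈ range N, Y n = ∑ d ∈ range D, T d := Finset.sum_comm
        rw [e1, Finset.sum_sub_distrib, Finset.sum_const, card_range, smul_sub,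
          ← Nat.cast_smul_eq_nsmul ℝ, smul_smul]
        have hsc : ((N:ℝ)*(D:ℝ))⁻¹ * (D:ℝ) = 1/(N:ℝ) := by field_simp
        rw [hsc]
      rw [key, norm_smul, Real.norm_eq_abs, abs_of_nonneg (by positivity)]
      have h1 : ‖∑ d ∈ range D, (S - T d)‖ ≤ (D:ℝ) * (2*(D:ℝ)*C) := by
        refine (norm_sum_le _ _).trans ?_
        calc (∑ d ∈ range D, ‖S - T d‖) ≤ ∑ _d ∈ range D, 2*(D:ℝ)*C :=
              Finset.sum_le_sum hTd
          _ = (D:ℝ) * (2*(D:ℝ)*C) := by rw [Finset.sum_const, card_range, nsmul_eq_mul]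
      calc ((N:ℝ)*(D:ℝ))⁻¹ * ‖∑ d ∈ range D, (S - T d)‖
          ≤ ((N:ℝ)*(D:ℝ))⁻¹ * ((D:ℝ) * (2*(D:ℝ)*C)) :=
            mul_le_mul_of_nonneg_left h1 (by positivity)
        _ = 2*(D:ℝ)*C/(N:ℝ) := by field_simp
    -- Step B : bound ‖b‖
    have hb2 : ‖b‖^2 ≤ ε'^2/2 := by
      have hnb : ‖b‖ = ((N:ℝ)*(D:ℝ))⁻¹ * ‖∑ n ∈ range N, Y n‖ := by
        rw [hbdef, norm_smul, Real.norm_eq_abs, abs_of_nonneg (by positivity)]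
      have hCS : ‖∑ n ∈ range N, Y n‖^2 ≤ (N:ℝ) * ∑ n ∈ range N, ‖Y n‖^2 := by
        have h1 : ‖∑ n ∈ range N, Y n‖ ≤ ∑ n ∈ range N, ‖Y n‖ := norm_sum_le _ _
        have h2 : (∑ n ∈ range N, ‖Y n‖)^2 ≤ (N:ℝ) * ∑ n ∈ range N, ‖Y n‖^2 := by
          simpa using sq_sum_le_card_mul_sum_sq (s := range N) (f := fun n => ‖Y n‖)
        nlinarith [norm_nonneg (∑ n ∈ range N, Y n),
          Finset.sum_nonneg (fun n (_ : n ∈ range N) => norm_nonneg (Y n))]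
      have hYexp : ∀ n, ‖Y n‖^2 = ∑ d ∈ range D, ∑ d' ∈ range D,
          RCLike.re (inner ℂ (x (n+1+d)) (x (n+1+d')) : ℂ) := by
        intro n
        rw [← inner_self_eq_norm_sq (𝕜 := ℂ) (Y n)]
        simp only [hYdef]
        rw [sum_inner, map_sum]
        refine Finset.sum_congr rfl fun d _ => ?_
        rw [inner_sum, map_sum]
      have hsumY : ∑ n ∈ range N, ‖Y n‖^2 = ∑ d ∈ range D, ∑ d' ∈ range D,
          RCLike.re (∑ n ∈ range N, (inner ℂ (x (n+1+d)) (x (n+1+d')) : ℂ)) := by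
        simp only [hYexp]
        rw [Finset.sum_comm]
        refine Finset.sum_congr rfl fun d _ => ?_
        rw [Finset.sum_comm]
        refine Finset.sum_congr rfl fun d' _ => ?_
        rw [map_sum]
      have hterm : ∀ d ∈ range D, ∀ d' ∈ range D,
          RCLike.re (∑ n ∈ range N, (inner ℂ (x (n+1+d)) (x (n+1+d')) : ℂ))
            ≤ (if d = d' then (N:ℝ)*C^2 else 0) + (N:ℝ)*δ := by
        intro d hd d' hd'
        by_cases hdd : d = d'
        · subst hdd
          rw [if_pos rfl]
          have he : RCLike.re (∑ n ∈ range N, (inner ℂ (x (n+1+d)) (x (n+1+d)) : ℂ))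
              = ∑ n ∈ range N, ‖x (n+1+d)‖^2 := by
            rw [map_sum]; exact Finset.sum_congr rfl fun n _ => inner_self_eq_norm_sq _
          rw [he]
          have h1 : ∑ n ∈ range N, ‖x (n+1+d)‖^2 ≤ ∑ _n ∈ range N, C^2 :=
            Finset.sum_le_sum fun n _ => by nlinarith [hC (n+1+d), norm_nonneg (x (n+1+d))]
          rw [Finset.sum_const, card_range, nsmul_eq_mul] at h1
          have h2 : (0:ℝ) ≤ (N:ℝ)*δ := by positivity
          linarith
        · simp only [if_neg hdd]
          have h1 := hoffN (d, d') (Finset.mem_product.mpr ⟨hd, hd'⟩) hdd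
          set Q : ℂ := ∑ n ∈ range N, (inner ℂ (x (n+1+d)) (x (n+1+d')) : ℂ) with hQ
          have h3 : ‖(1/(N:ℂ)) * Q‖ = (1/(N:ℝ)) * ‖Q‖ := by
            rw [norm_mul]
            congr 1
            simp
          rw [h3] at h1
          rw [one_div_mul_eq_div] at h1
          have h2 : ‖Q‖ ≤ (N:ℝ) * δ := by
            have := (div_lt_iff₀ hNpos).mp h1
            linarith
          calc RCLike.re Q ≤ |RCLike.re Q| := le_abs_self _
            _ ≤ ‖Q‖ := RCLike.abs_re_le_norm Q
            _ ≤ (N:ℝ)*δ := h2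
            _ = 0 + (N:ℝ)*δ := by ring
      have hsum2 : ∑ d ∈ range D, ∑ d' ∈ range D,
          RCLike.re (∑ n ∈ range N, (inner ℂ (x (n+1+d)) (x (n+1+d')) : ℂ))
            ≤ (D:ℝ)*((N:ℝ)*C^2) + (D:ℝ)^2*((N:ℝ)*δ) := by
        calc ∑ d ∈ range D, ∑ d' ∈ range D,
              RCLike.re (∑ n ∈ range N, (inner ℂ (x (n+1+d)) (x (n+1+d')) : ℂ))
            ≤ ∑ d ∈ range D, ∑ d' ∈ range D,
              ((if d = d' then (N:ℝ)*C^2 else 0) + (N:ℝ)*δ) :=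
              Finset.sum_le_sum fun d hd => Finset.sum_le_sum fun d' hd' => hterm d hd d' hd'
          _ = ∑ d ∈ range D, ((N:ℝ)*C^2 + (D:ℝ)*((N:ℝ)*δ)) := by
              refine Finset.sum_congr rfl fun d hd => ?_
              rw [Finset.sum_add_distrib, Finset.sum_ite_eq, if_pos hd,
                Finset.sum_const, card_range, nsmul_eq_mul]
          _ = (D:ℝ)*((N:ℝ)*C^2 + (D:ℝ)*((N:ℝ)*δ)) := by
              rw [Finset.sum_const, card_range, nsmul_eq_mul]
          _ ≤ (D:ℝ)*((N:ℝ)*C^2) + (D:ℝ)^2*((N:ℝ)*δ) := le_of_eq (by ring)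
      rw [hnb, mul_pow]
      calc (((N:ℝ)*(D:ℝ))⁻¹)^2 * ‖∑ n ∈ range N, Y n‖^2
          ≤ (((N:ℝ)*(D:ℝ))⁻¹)^2 * ((N:ℝ) * ∑ n ∈ range N, ‖Y n‖^2) :=
            mul_le_mul_of_nonneg_left hCS (by positivity)
        _ ≤ (((N:ℝ)*(D:ℝ))⁻¹)^2 * ((N:ℝ) * ((D:ℝ)*((N:ℝ)*C^2) + (D:ℝ)^2*((N:ℝ)*δ))) := by
            apply mul_le_mul_of_nonneg_left _ (by positivity)
            apply mul_le_mul_of_nonneg_left _ hNpos.le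
            rw [hsumY]; exact hsum2
        _ = C^2/(D:ℝ) + δ := by field_simp
        _ ≤ ε'^2/4 + ε'^2/4 := by linarith [hDle, hδdef]
        _ = ε'^2/2 := by ring
    have hbnorm : ‖b‖ ≤ 3*ε'/4 := by
      nlinarith [norm_nonneg b, hε', hb2, sq_nonneg (‖b‖ - 3*ε'/4)]
    have hfin : ‖(1/(N:ℝ)) • S‖ ≤ ε' := by
      calc ‖(1/(N:ℝ)) • S‖ = ‖b + ((1/(N:ℝ)) • S - b)‖ := by rw [add_sub_cancel]
        _ ≤ ‖b‖ + ‖(1/(N:ℝ)) • S - b‖ := norm_add_le _ _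
        _ ≤ 3*ε'/4 + 2*(D:ℝ)*C/(N:ℝ) := add_le_add hbnorm hab
        _ ≤ 3*ε'/4 + ε'/4 := by linarith
        _ = ε' := by ring
    rw [Real.dist_eq, sub_zero, abs_of_nonneg (norm_nonneg _)]
    calc ‖(1/(N:ℝ)) • S‖ ≤ ε' := hfin
      _ < ε := by rw [hε'def]; linarith
  exact eventually_atTop.mp hfinal
end

section
/- Let (X, B, μ) be a probability space, S : X → X an invertible totally ergodic measure preserving transformation, g ∈ L²(X,μ), and p ∈ ℤ[x] a polynomial of degree at least 2. If E[g | I_S] = 0 and E[g | K_rat(S)] = 0 (equivalently the spectral measure μ_{g,S} has no rational atoms), then for every h ∈ ℕ, lim_{N→∞} (1/N)∑_{n=1}^N ⟨S^{p(n+h)}g, S^{p(n)}g⟩ = 0. -/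
open MeasureTheory Filter Finset Polynomial
open scoped Real


noncomputable def ee (t : ℝ) : ℂ := Complex.exp (2 * Real.pi * Complex.I * t)

lemma ee_norm (t : ℝ) : ‖ee t‖ = 1 := by
  rw [ee, Complex.norm_exp]
  have : (2 * (Real.pi:ℂ) * Complex.I * (t:ℂ)).re = 0 := by simp [Complex.mul_re]
  rw [this, Real.exp_zero]

lemma ee_add (s t : ℝ) : ee (s + t) = ee s * ee t := by
  rw [ee, ee, ee, ← Complex.exp_add]; congr 1; push_cast; ring

lemma ee_conj (t : ℝ) : (starRingEnd ℂ) (ee t) = ee (-t) := by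
  rw [ee, ee, ← Complex.exp_conj]; congr 1
  simp only [map_mul, Complex.conj_I, Complex.conj_ofReal, map_ofNat, Complex.ofReal_neg]
  ring

lemma ee_pow (t : ℝ) (n : ℕ) : ee t ^ n = ee (n * t) := by
  rw [ee, ee, ← Complex.exp_nat_mul]; congr 1; push_cast; ring

lemma ee_ne_one {t : ℝ} (ht : Irrational t) : ee t ≠ 1 := by
  intro h
  rw [ee, Complex.exp_eq_one_iff] at h
  obtain ⟨n, hn⟩ := h
  have h2 : (2 * (Real.pi:ℂ) * Complex.I) ≠ 0 := by
    have := Real.pi_ne_zero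
    have h3 : ((Real.pi:ℝ):ℂ) ≠ 0 := by exact_mod_cast this
    exact mul_ne_zero (mul_ne_zero two_ne_zero h3) Complex.I_ne_zero
  have : (t : ℂ) = (n : ℂ) := by
    apply mul_left_cancel₀ h2
    linear_combination hn
  have : t = (n : ℝ) := by exact_mod_cast this
  exact ht.ne_int n this

lemma sum_shift (v : ℕ → ℂ) (C : ℝ) (hv : ∀ n, ‖v n‖ ≤ C) (h N : ℕ) :
    ‖(∑ n ∈ range N, v (n + h)) - ∑ n ∈ range N, v n‖ ≤ 2 * h * C := by
  have h1 : ∑ n ∈ range N, v (n + h) = ∑ k ∈ Ico h (N + h), v k := by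
    rw [Finset.sum_Ico_eq_sum_range]
    simp only [Nat.add_sub_cancel]
    exact Finset.sum_congr rfl fun k _ => by rw [add_comm]
  have h2 := Finset.sum_Ico_consecutive v (Nat.zero_le h) (Nat.le_add_left h N)
  have h3 := Finset.sum_Ico_consecutive v (Nat.zero_le N) (Nat.le_add_right N h)
  have key : (∑ n ∈ range N, v (n + h)) - ∑ n ∈ range N, v n
      = (∑ k ∈ Ico N (N + h), v k) - ∑ k ∈ Ico 0 h, v k := by
    rw [h1, Finset.range_eq_Ico]
    linear_combination h2 - h3
  rw [key]
  rw [norm_sub_rev]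
  have b1 : ‖∑ k ∈ Ico 0 h, v k‖ ≤ h * C := by
    calc ‖∑ k ∈ Ico 0 h, v k‖ ≤ ∑ k ∈ Ico 0 h, ‖v k‖ := norm_sum_le _ _
    _ ≤ ∑ _k ∈ Ico 0 h, C := Finset.sum_le_sum fun k _ => hv k
    _ = h * C := by simp [Nat.card_Ico]
  have b2 : ‖∑ k ∈ Ico N (N + h), v k‖ ≤ h * C := by
    calc ‖∑ k ∈ Ico N (N+h), v k‖ ≤ ∑ k ∈ Ico N (N+h), ‖v k‖ := norm_sum_le _ _
    _ ≤ ∑ _k ∈ Ico N (N+h), C := Finset.sum_le_sum fun k _ => hv k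
    _ = h * C := by simp [Nat.card_Ico]
  calc ‖_ - _‖ ≤ ‖∑ k ∈ Ico 0 h, v k‖ + ‖∑ k ∈ Ico N (N + h), v k‖ := norm_sub_le _ _
  _ ≤ h * C + h * C := add_le_add b1 b2
  _ = 2 * h * C := by ring

-- van der Corput finitary inequality
lemma vdc_core (u : ℕ → ℂ) (hu : ∀ n, ‖u n‖ ≤ 1) (H N : ℕ) (hH : 1 ≤ H) :
    ‖∑ n ∈ range N, u n‖ ≤ 2 * H + Real.sqrt ((N:ℝ) * ((H:ℝ) * N
      + (H:ℝ)^2 * ((∑ d ∈ Ico 1 H, ‖∑ n ∈ range N, u (n + d) * (starRingEnd ℂ) (u n)‖) + 2 * H))) / H := by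
  classical
  set cj := (starRingEnd ℂ) with hcj
  set v : ℕ → ℂ := fun n => ∑ d ∈ range H, u (n + d) with hv
  set T : ℂ := ∑ n ∈ range N, v n with hT
  set S : ℂ := ∑ n ∈ range N, u n with hS
  set Sig : ℝ := ∑ d ∈ Ico 1 H, ‖∑ n ∈ range N, u (n + d) * cj (u n)‖ with hSig
  have hSignn : 0 ≤ Sig := Finset.sum_nonneg fun _ _ => norm_nonneg _
  have hHpos : (0:ℝ) < H := by exact_mod_cast hH
  -- Step A
  have stepA : ‖(H:ℂ) * S - T‖ ≤ 2 * (H:ℝ)^2 := by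
    have hTsw : T = ∑ d ∈ range H, ∑ n ∈ range N, u (n + d) := by
      rw [hT, hv]; exact Finset.sum_comm
    have hrw : (H:ℂ) * S - T = ∑ d ∈ range H, (S - ∑ n ∈ range N, u (n + d)) := by
      rw [Finset.sum_sub_distrib, hTsw, Finset.sum_const, Finset.card_range, nsmul_eq_mul]
    rw [hrw]
    calc ‖∑ d ∈ range H, (S - ∑ n ∈ range N, u (n + d))‖
        ≤ ∑ d ∈ range H, ‖S - ∑ n ∈ range N, u (n + d)‖ := norm_sum_le _ _
      _ ≤ ∑ _d ∈ range H, 2 * (H:ℝ) := by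
          apply Finset.sum_le_sum
          intro d hd
          rw [norm_sub_rev]
          calc ‖(∑ n ∈ range N, u (n + d)) - S‖ ≤ 2 * d * 1 := sum_shift u 1 hu d N
            _ ≤ 2 * (H:ℝ) := by
                have : (d:ℝ) ≤ H := by exact_mod_cast (Finset.mem_range.mp hd).le
                nlinarith
      _ = 2 * (H:ℝ)^2 := by rw [Finset.sum_const, Finset.card_range, nsmul_eq_mul]; ring
  -- Step B
  have stepB : ‖T‖^2 ≤ (N:ℝ) * ∑ n ∈ range N, ‖v n‖^2 := by
    have h1 : ‖T‖ ≤ ∑ n ∈ range N, ‖v n‖ := norm_sum_le _ _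
    have h2 : (∑ n ∈ range N, ‖v n‖)^2 ≤ (N:ℝ) * ∑ n ∈ range N, ‖v n‖^2 := by
      have := Finset.sum_mul_sq_le_sq_mul_sq (range N) (fun _ => (1:ℝ)) (fun n => ‖v n‖)
      simpa using this
    calc ‖T‖^2 ≤ (∑ n ∈ range N, ‖v n‖)^2 := pow_le_pow_left₀ (norm_nonneg _) h1 2
      _ ≤ _ := h2
  -- Step C
  have stepC : ∑ n ∈ range N, ‖v n‖^2 ≤ (H:ℝ) * N + (H:ℝ)^2 * (Sig + 2 * H) := by
    have hucj : ∀ a b : ℕ, ‖u a * cj (u b)‖ ≤ 1 := by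
      intro a b
      rw [norm_mul, hcj, RCLike.norm_conj]
      calc ‖u a‖ * ‖u b‖ ≤ 1 * 1 := by
            apply mul_le_mul (hu a) (hu b) (norm_nonneg _) zero_le_one
        _ = 1 := by ring
    have hsum1 : ∑ n ∈ range N, ‖v n‖^2 = (∑ n ∈ range N, v n * cj (v n)).re := by
      rw [Complex.re_sum]
      refine Finset.sum_congr rfl fun n _ => ?_
      rw [hcj, Complex.mul_conj]
      simp [Complex.normSq_eq_norm_sq, ← Complex.ofReal_pow]
    have expand : ∀ n, v n * cj (v n)
        = ∑ d1 ∈ range H, ∑ d2 ∈ range H, u (n + d1) * cj (u (n + d2)) := by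
      intro n
      rw [hv, hcj]
      simp only [map_sum]
      rw [Finset.sum_mul_sum]
    have hsum2 : (∑ n ∈ range N, v n * cj (v n))
        = ∑ d1 ∈ range H, ∑ d2 ∈ range H, ∑ n ∈ range N, u (n + d1) * cj (u (n + d2)) := by
      calc ∑ n ∈ range N, v n * cj (v n)
          = ∑ n ∈ range N, ∑ d1 ∈ range H, ∑ d2 ∈ range H, u (n + d1) * cj (u (n + d2)) :=
            Finset.sum_congr rfl fun n _ => expand n
        _ = _ := by
            rw [Finset.sum_comm]
            exact Finset.sum_congr rfl fun d1 _ => Finset.sum_comm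
    -- bound for off-diagonal pairs with d2 < d1
    have hgen : ∀ d1 d2 : ℕ, d2 < d1 → d1 < H →
        ‖∑ n ∈ range N, u (n + d1) * cj (u (n + d2))‖ ≤ Sig + 2 * H := by
      intro d1 d2 hlt hdH
      set w : ℕ → ℂ := fun k => u (k + (d1 - d2)) * cj (u k) with hw
      have hwb : ∀ k, ‖w k‖ ≤ 1 := fun k => hucj _ _
      have hBeq : ∑ n ∈ range N, u (n + d1) * cj (u (n + d2)) = ∑ n ∈ range N, w (n + d2) := by
        refine Finset.sum_congr rfl fun n _ => ?_
        show u (n + d1) * cj (u (n + d2)) = u (n + d2 + (d1 - d2)) * cj (u (n + d2))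
        rw [show n + d2 + (d1 - d2) = n + d1 from by omega]
      have hshift := sum_shift w 1 hwb d2 N
      have hA : ‖∑ n ∈ range N, w n‖ ≤ Sig := by
        rw [hSig]
        have hmem : d1 - d2 ∈ Ico 1 H := by
          rw [Finset.mem_Ico]; omega
        exact Finset.single_le_sum (f := fun d => ‖∑ n ∈ range N, u (n + d) * cj (u n)‖)
          (fun i _ => norm_nonneg _) hmem
      rw [hBeq]
      have : ‖∑ n ∈ range N, w (n + d2)‖
          ≤ ‖(∑ n ∈ range N, w (n + d2)) - ∑ n ∈ range N, w n‖ + ‖∑ n ∈ range N, w n‖ := by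
        calc ‖∑ n ∈ range N, w (n + d2)‖
            = ‖((∑ n ∈ range N, w (n + d2)) - ∑ n ∈ range N, w n) + ∑ n ∈ range N, w n‖ := by
              rw [sub_add_cancel]
          _ ≤ _ := norm_add_le _ _
      have hd2H : (d2:ℝ) ≤ H := by
        have : (d2:ℝ) < H := by exact_mod_cast lt_trans hlt hdH
        linarith
      calc ‖∑ n ∈ range N, w (n + d2)‖
          ≤ ‖(∑ n ∈ range N, w (n + d2)) - ∑ n ∈ range N, w n‖ + ‖∑ n ∈ range N, w n‖ := this
        _ ≤ 2 * d2 * 1 + Sig := add_le_add hshift hA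
        _ ≤ Sig + 2 * H := by nlinarith
    have pair : ∀ d1 ∈ range H, ∀ d2 ∈ range H,
        ‖∑ n ∈ range N, u (n + d1) * cj (u (n + d2))‖
          ≤ (if d1 = d2 then (N:ℝ) else 0) + (Sig + 2 * H) := by
      intro d1 hd1 d2 hd2
      rcases lt_trichotomy d1 d2 with hlt | heq | hgt
      · rw [if_neg hlt.ne]
        have hcc : ‖∑ n ∈ range N, u (n + d1) * cj (u (n + d2))‖
            = ‖∑ n ∈ range N, u (n + d2) * cj (u (n + d1))‖ := by
          rw [← RCLike.norm_conj (K := ℂ) (∑ n ∈ range N, u (n + d1) * cj (u (n + d2)))]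
          congr 1
          rw [map_sum]
          refine Finset.sum_congr rfl fun n _ => ?_
          rw [hcj, map_mul, Complex.conj_conj, mul_comm]
        rw [hcc, zero_add]
        exact hgen d2 d1 hlt (Finset.mem_range.mp hd2)
      · rw [if_pos heq, heq]
        have : ‖∑ n ∈ range N, u (n + d2) * cj (u (n + d2))‖ ≤ (N:ℝ) := by
          calc ‖∑ n ∈ range N, u (n + d2) * cj (u (n + d2))‖
              ≤ ∑ n ∈ range N, ‖u (n + d2) * cj (u (n + d2))‖ := norm_sum_le _ _
            _ ≤ ∑ _n ∈ range N, (1:ℝ) := Finset.sum_le_sum fun n _ => hucj _ _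
            _ = N := by simp
        linarith [hSignn, hHpos]
      · rw [if_neg hgt.ne', zero_add]
        exact hgen d1 d2 hgt (Finset.mem_range.mp hd1)
    calc ∑ n ∈ range N, ‖v n‖^2 = (∑ n ∈ range N, v n * cj (v n)).re := hsum1
      _ ≤ ‖∑ n ∈ range N, v n * cj (v n)‖ := by
          exact Complex.re_le_norm _
      _ = ‖∑ d1 ∈ range H, ∑ d2 ∈ range H, ∑ n ∈ range N, u (n + d1) * cj (u (n + d2))‖ := by
          rw [hsum2]
      _ ≤ ∑ d1 ∈ range H, ∑ d2 ∈ range H, ‖∑ n ∈ range N, u (n + d1) * cj (u (n + d2))‖ := by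
          calc ‖∑ d1 ∈ range H, ∑ d2 ∈ range H, ∑ n ∈ range N, u (n + d1) * cj (u (n + d2))‖
              ≤ ∑ d1 ∈ range H, ‖∑ d2 ∈ range H, ∑ n ∈ range N, u (n + d1) * cj (u (n + d2))‖ :=
                norm_sum_le _ _
            _ ≤ _ := Finset.sum_le_sum fun d1 _ => norm_sum_le _ _
      _ ≤ ∑ d1 ∈ range H, ∑ d2 ∈ range H, ((if d1 = d2 then (N:ℝ) else 0) + (Sig + 2 * H)) := by
          exact Finset.sum_le_sum fun d1 hd1 => Finset.sum_le_sum fun d2 hd2 => pair d1 hd1 d2 hd2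
      _ = (H:ℝ) * N + (H:ℝ)^2 * (Sig + 2 * H) := by
          simp only [Finset.sum_add_distrib, Finset.sum_ite_eq, Finset.sum_const,
            Finset.card_range, nsmul_eq_mul]
          simp only [Finset.mem_range]
          rw [Finset.sum_ite_of_true]
          · rw [Finset.sum_const, Finset.card_range, nsmul_eq_mul]; ring
          · intro d hd; exact Finset.mem_range.mp hd
  -- assemble
  have hTb : ‖T‖ ≤ Real.sqrt ((N:ℝ) * ((H:ℝ) * N + (H:ℝ)^2 * (Sig + 2 * H))) := by
    rw [← Real.sqrt_sq (norm_nonneg T)]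
    apply Real.sqrt_le_sqrt
    calc ‖T‖^2 ≤ (N:ℝ) * ∑ n ∈ range N, ‖v n‖^2 := stepB
      _ ≤ _ := mul_le_mul_of_nonneg_left stepC (Nat.cast_nonneg N)
  have hHS : (H:ℝ) * ‖S‖ ≤ 2 * (H:ℝ)^2 + ‖T‖ := by
    have h1 : (H:ℝ) * ‖S‖ = ‖(H:ℂ) * S‖ := by
      rw [norm_mul]; simp
    rw [h1]
    calc ‖(H:ℂ) * S‖ = ‖((H:ℂ) * S - T) + T‖ := by ring_nf
      _ ≤ ‖(H:ℂ) * S - T‖ + ‖T‖ := norm_add_le _ _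
      _ ≤ 2 * (H:ℝ)^2 + ‖T‖ := by linarith
  set R : ℝ := Real.sqrt ((N:ℝ) * ((H:ℝ) * N + (H:ℝ)^2 * (Sig + 2 * H))) with hR
  have h2 : ‖S‖ * H ≤ 2 * (H:ℝ)^2 + R := by nlinarith
  calc ‖S‖ = ‖S‖ * H / H := by field_simp
    _ ≤ (2 * (H:ℝ)^2 + R) / H := by apply div_le_div_of_nonneg_right h2 hHpos.le
    _ = 2 * H + R / H := by field_simp

lemma vdc (u : ℕ → ℂ) (hu : ∀ n, ‖u n‖ ≤ 1)
    (hcor : ∀ d : ℕ, 0 < d → Tendsto (fun N : ℕ =>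
      (1 / (N:ℂ)) * ∑ n ∈ range N, u (n + d) * (starRingEnd ℂ) (u n)) atTop (nhds 0)) :
    Tendsto (fun N : ℕ => (1 / (N:ℂ)) * ∑ n ∈ range N, u n) atTop (nhds 0) := by
  rw [tendsto_zero_iff_norm_tendsto_zero]
  have hnorm : ∀ (w : ℕ → ℂ) (N : ℕ), ‖(1 / (N:ℂ)) * ∑ n ∈ range N, w n‖
      = ‖∑ n ∈ range N, w n‖ / N := by
    intro w N
    rw [norm_mul, norm_div, norm_one, Complex.norm_natCast]
    ring
  simp only [hnorm]
  -- suffices epsilon criterion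
  rw [Metric.tendsto_atTop]
  intro ε₀ hε₀
  set ε : ℝ := ε₀ / 2 with hεdef
  have hε : 0 < ε := by positivity
  -- choose H
  set H : ℕ := ⌈(16:ℝ)/ε^2⌉₊ + 1 with hHdef
  have hH1 : 1 ≤ H := Nat.le_add_left 1 _
  have hHpos : (0:ℝ) < H := by exact_mod_cast hH1
  have hH16 : 16/ε^2 ≤ (H:ℝ) := by
    calc (16:ℝ)/ε^2 ≤ ⌈(16:ℝ)/ε^2⌉₊ := Nat.le_ceil _
      _ ≤ H := by exact_mod_cast Nat.le_succ _
  have hsqrtH : 4/ε ≤ Real.sqrt H := by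
    rw [Real.le_sqrt (by positivity) (by positivity)]
    calc (4/ε)^2 = 16/ε^2 := by rw [div_pow]; norm_num
      _ ≤ (H:ℝ) := hH16
  -- the correlation sums
  set A : ℕ → ℕ → ℂ := fun d N => ∑ n ∈ range N, u (n + d) * (starRingEnd ℂ) (u n) with hA
  set Sig : ℕ → ℝ := fun N => ∑ d ∈ Ico 1 H, ‖A d N‖ with hSigdef
  -- eventually Sig N * H ≤ N
  have hSigT : Tendsto (fun N : ℕ => Sig N / N) atTop (nhds 0) := by
    have : (fun N : ℕ => Sig N / N) = fun N : ℕ => ∑ d ∈ Ico 1 H, ‖A d N‖ / N := by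
      funext N; rw [hSigdef]; rw [Finset.sum_div]
    rw [this]
    have h0 : (0:ℝ) = ∑ _d ∈ Ico 1 H, (0:ℝ) := by simp
    rw [h0]
    apply tendsto_finset_sum
    intro d hd
    have hd1 : 0 < d := (Finset.mem_Ico.mp hd).1
    have := hcor d hd1
    rw [tendsto_zero_iff_norm_tendsto_zero] at this
    have heq : (fun N : ℕ => ‖(1 / (N:ℂ)) * A d N‖) = fun N : ℕ => ‖A d N‖ / N := by
      funext N; exact hnorm _ N
    rwa [heq] at this
  have hev1 : ∀ᶠ N : ℕ in atTop, Sig N * H ≤ N := by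
    have h2 : ∀ᶠ N : ℕ in atTop, Sig N / N < 1 / (H:ℝ) := by
      have := Metric.tendsto_nhds.mp hSigT (1/(H:ℝ)) (by positivity)
      filter_upwards [this] with N hN
      rw [Real.dist_eq, sub_zero] at hN
      calc Sig N / N ≤ |Sig N / N| := le_abs_self _
        _ < 1 / H := hN
    filter_upwards [h2, eventually_ge_atTop 1] with N hN hN1
    have hNpos : (0:ℝ) < N := by exact_mod_cast hN1
    rw [div_lt_div_iff₀ hNpos hHpos] at hN
    linarith
  have hev2 : ∀ᶠ N : ℕ in atTop, ((H:ℝ)^2 ≤ N) ∧ (4*H/ε ≤ (N:ℝ)) ∧ 1 ≤ N := by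
    have ha : ∀ᶠ N : ℕ in atTop, (H^2 ≤ N) := eventually_ge_atTop _
    have hb : ∀ᶠ N : ℕ in atTop, (⌈4*(H:ℝ)/ε⌉₊ ≤ N) := eventually_ge_atTop _
    have hc : ∀ᶠ N : ℕ in atTop, 1 ≤ N := eventually_ge_atTop _
    filter_upwards [ha, hb, hc] with N h1 h2 h3
    refine ⟨by exact_mod_cast h1, ?_, h3⟩
    calc 4*(H:ℝ)/ε ≤ ⌈4*(H:ℝ)/ε⌉₊ := Nat.le_ceil _
      _ ≤ N := by exact_mod_cast h2
  have hev := hev1.and hev2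
  rw [eventually_atTop] at hev
  obtain ⟨N₀, hN₀⟩ := hev
  refine ⟨N₀, fun N hN => ?_⟩
  obtain ⟨hSigN, hH2N, hH4N, hN1⟩ := hN₀ N hN
  have hNpos : (0:ℝ) < N := by exact_mod_cast hN1
  rw [Real.dist_eq, sub_zero, abs_of_nonneg (by positivity)]
  have core := vdc_core u hu H N hH1
  have hin : (N:ℝ) * ((H:ℝ)*N + (H:ℝ)^2 * (Sig N + 2*H)) ≤ 4*(H:ℝ)*(N:ℝ)^2 := by
    have e1 : (Sig N * (H:ℝ)) * ((H:ℝ)*(N:ℝ)) ≤ (N:ℝ) * ((H:ℝ)*(N:ℝ)) :=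
      mul_le_mul_of_nonneg_right hSigN (by positivity)
    have e2 : (2*(H:ℝ)*(N:ℝ)) * ((H:ℝ)^2) ≤ (2*(H:ℝ)*(N:ℝ)) * (N:ℝ) :=
      mul_le_mul_of_nonneg_left hH2N (by positivity)
    nlinarith [e1, e2]
  have hsq : Real.sqrt ((N:ℝ) * ((H:ℝ)*N + (H:ℝ)^2 * (Sig N + 2*H)))
      ≤ 2*Real.sqrt H * N := by
    have h4 : (2*Real.sqrt H * N)^2 = 4*(H:ℝ)*(N:ℝ)^2 := by
      rw [mul_pow, mul_pow, Real.sq_sqrt hHpos.le]; ring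
    calc Real.sqrt ((N:ℝ) * ((H:ℝ)*N + (H:ℝ)^2 * (Sig N + 2*H)))
        ≤ Real.sqrt (4*(H:ℝ)*(N:ℝ)^2) := Real.sqrt_le_sqrt hin
      _ = 2*Real.sqrt H*N := by rw [← h4, Real.sqrt_sq (by positivity)]
  have hsH : Real.sqrt H * Real.sqrt H = (H:ℝ) := Real.mul_self_sqrt hHpos.le
  have hεs : 4 ≤ ε * Real.sqrt H := by
    rw [div_le_iff₀ hε] at hsqrtH; linarith [hsqrtH]
  have key2 : 2*Real.sqrt H*(N:ℝ)/H ≤ ε/2 * N := by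
    rw [div_le_iff₀ hHpos]
    have e4 : 4 * ((N:ℝ) * Real.sqrt H) ≤ (ε * Real.sqrt H) * ((N:ℝ) * Real.sqrt H) :=
      mul_le_mul_of_nonneg_right hεs (mul_nonneg hNpos.le (Real.sqrt_nonneg _))
    have e3 : (ε * Real.sqrt H) * ((N:ℝ) * Real.sqrt H) = ε * N * ((H:ℝ)) := by
      calc (ε * Real.sqrt H) * ((N:ℝ) * Real.sqrt H)
          = ε * N * (Real.sqrt H * Real.sqrt H) := by ring
        _ = ε * N * ((H:ℝ)) := by rw [hsH]
    rw [e3] at e4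
    linarith
  have key1 : 2*(H:ℝ) ≤ ε/2 * N := by
    rw [div_le_iff₀ hε] at hH4N
    linarith
  have hfin : ‖∑ n ∈ range N, u n‖ ≤ ε * N := by
    calc ‖∑ n ∈ range N, u n‖
        ≤ 2 * H + Real.sqrt ((N:ℝ) * ((H:ℝ) * N + (H:ℝ)^2 * (Sig N + 2 * H))) / H := core
      _ ≤ ε/2 * N + 2*Real.sqrt H*(N:ℝ)/H := by
          have h5 := div_le_div_of_nonneg_right hsq hHpos.le
          linarith [h5, key1]
      _ ≤ ε/2 * N + ε/2 * N := by linarith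
      _ = ε * N := by ring
  calc ‖∑ n ∈ range N, u n‖ / N ≤ ε := by
        rw [div_le_iff₀ hNpos]; linarith
    _ < ε₀ := by rw [hεdef]; linarith

-- degree/leading coefficient of taylor difference
lemma taylor_diff {R : Type*} [CommRing R] (f : R[X]) (d : ℕ) (hd : 1 ≤ d)
    (hf : f.natDegree = d) (r : R) :
    (taylor r f - f).natDegree ≤ d - 1 ∧
      (taylor r f - f).coeff (d-1) = d * f.coeff d * r := by
  have hcoefftop : ∀ m, d ≤ m → (taylor r f - f).coeff m = 0 := by
    intro m hm
    rcases eq_or_lt_of_le hm with heq | hlt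
    · -- m = d
      rw [← heq]
      rw [Polynomial.coeff_sub, Polynomial.taylor_coeff]
      have hH : (Polynomial.hasseDeriv d) f = Polynomial.C (f.coeff d) := by
        ext n
        rw [Polynomial.hasseDeriv_coeff, Polynomial.coeff_C]
        rcases Nat.eq_zero_or_pos n with h0 | hpos
        · subst h0; simp
        · rw [if_neg hpos.ne']
          have hzz : f.coeff (n + d) = 0 := by
            apply Polynomial.coeff_eq_zero_of_natDegree_lt
            omega
          rw [hzz, mul_zero]
      rw [hH, Polynomial.eval_C, sub_self]
    · rw [Polynomial.coeff_sub]
      have h1 : (taylor r f).coeff m = 0 := by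
        apply Polynomial.coeff_eq_zero_of_natDegree_lt
        rw [Polynomial.natDegree_taylor, hf]; exact hlt
      have h2 : f.coeff m = 0 := by
        apply Polynomial.coeff_eq_zero_of_natDegree_lt
        rw [hf]; exact hlt
      rw [h1, h2, sub_self]
  constructor
  · rw [Polynomial.natDegree_le_iff_coeff_eq_zero]
    intro m hm
    exact hcoefftop m (by omega)
  · rw [Polynomial.coeff_sub, Polynomial.taylor_coeff]
    have hH : (Polynomial.hasseDeriv (d-1)) f
        = Polynomial.C (f.coeff (d-1)) + Polynomial.C ((d:R) * f.coeff d) * Polynomial.X := by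
      ext n
      rw [Polynomial.hasseDeriv_coeff]
      rcases n with _ | n
      · simp
      · rcases n with _ | n
        · rw [show 1 + (d-1) = d from by omega]
          have hch : d.choose (d-1) = d := by
            rw [← Nat.choose_symm (by omega : d - 1 ≤ d), show d - (d-1) = 1 from by omega,
              Nat.choose_one_right]
          rw [hch]
          simp
        · have : f.coeff (n + 2 + (d-1)) = 0 := by
            apply Polynomial.coeff_eq_zero_of_natDegree_lt
            omega
          rw [this, mul_zero]
          simp [Polynomial.coeff_C]
    rw [hH]
    simp only [Polynomial.eval_add, Polynomial.eval_C, Polynomial.eval_mul, Polynomial.eval_X]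
    ring

-- Weyl equidistribution for polynomials with irrational leading coefficient
lemma weyl : ∀ d : ℕ, 1 ≤ d → ∀ f : ℝ[X], f.natDegree = d → Irrational f.leadingCoeff →
    Tendsto (fun N : ℕ => (1 / (N:ℂ)) * ∑ n ∈ range N, ee (f.eval n)) atTop (nhds 0) := by
  intro d
  induction d using Nat.strong_induction_on with
  | _ d ih =>
    intro hd f hdeg hirr
    rcases eq_or_lt_of_le hd with h1 | h2
    · -- base case : degree 1
      have hdeg1 : f.natDegree = 1 := by omega
      have heval : ∀ x : ℝ, f.eval x = f.coeff 0 + f.coeff 1 * x := by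
        intro x
        rw [Polynomial.eval_eq_sum_range, hdeg1]
        rw [Finset.sum_range_succ, Finset.sum_range_succ]
        simp
      have ha : Irrational (f.coeff 1) := by
        rwa [Polynomial.leadingCoeff, hdeg1] at hirr
      set z : ℂ := ee (f.coeff 1) with hz
      have hzne : z ≠ 1 := ee_ne_one ha
      have hsum : ∀ N : ℕ, ∑ n ∈ range N, ee (f.eval n)
          = ee (f.coeff 0) * ((z^N - 1)/(z - 1)) := by
        intro N
        rw [← geom_sum_eq hzne N, Finset.mul_sum]
        refine Finset.sum_congr rfl fun n _ => ?_
        rw [heval, ee_add, hz, ee_pow, mul_comm ((n:ℝ)) (f.coeff 1)]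
      rw [tendsto_zero_iff_norm_tendsto_zero]
      apply squeeze_zero (fun N => norm_nonneg _) (g := fun N : ℕ => (1 * (2 / ‖z - 1‖)) / N)
      · intro N
        rw [hsum, norm_mul, norm_mul, norm_div, norm_one, Complex.norm_natCast, ee_norm, norm_div]
        have hb : ‖z^N - 1‖ ≤ 2 := by
          calc ‖z^N - 1‖ ≤ ‖z^N‖ + ‖(1:ℂ)‖ := norm_sub_le _ _
            _ = ‖z‖^N + 1 := by rw [norm_pow, norm_one]
            _ = 2 := by rw [hz, ee_norm, one_pow]; norm_num
        have hzpos : 0 < ‖z - 1‖ := by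
          rw [norm_pos_iff]; exact sub_ne_zero_of_ne hzne
        have step : 1 * (‖z^N - 1‖/‖z-1‖) ≤ 1 * (2/‖z-1‖) := by
          rw [one_mul, one_mul]
          exact div_le_div_of_nonneg_right hb hzpos.le
        calc 1 / (N:ℝ) * (1 * (‖z^N - 1‖/‖z-1‖)) = 1 * (‖z^N - 1‖/‖z-1‖) / N := by ring
          _ ≤ 1 * (2/‖z-1‖) / N := div_le_div_of_nonneg_right step (Nat.cast_nonneg N)
      · exact tendsto_const_div_atTop_nhds_zero_nat _
    · -- inductive step
      set u : ℕ → ℂ := fun n => ee (f.eval n) with hu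
      have hub : ∀ n, ‖u n‖ ≤ 1 := fun n => le_of_eq (ee_norm _)
      apply vdc u hub
      intro k hk
      set g : ℝ[X] := taylor (k:ℝ) f - f with hg
      obtain ⟨hgdeg, hgcoeff⟩ := taylor_diff f d hd hdeg (k:ℝ)
      have hfa : f.coeff d = f.leadingCoeff := by rw [Polynomial.leadingCoeff, hdeg]
      have hglead : g.coeff (d-1) = d * f.leadingCoeff * k := by rw [hgcoeff, hfa]
      have hgirr : Irrational (g.coeff (d-1)) := by
        rw [hglead]
        have : (d:ℝ) * f.leadingCoeff * (k:ℝ) = ((d*k : ℕ) : ℝ) * f.leadingCoeff := by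
          push_cast; ring
        rw [this]
        exact hirr.natCast_mul (by positivity)
      have hgne : g.coeff (d-1) ≠ 0 := hgirr.ne_zero
      have hgdeg' : g.natDegree = d - 1 :=
        le_antisymm hgdeg (Polynomial.le_natDegree_of_ne_zero hgne)
      have hglead' : Irrational g.leadingCoeff := by
        rwa [Polynomial.leadingCoeff, hgdeg']
      have hIH := ih (d-1) (by omega) (by omega) g hgdeg' hglead'
      apply hIH.congr
      intro N
      congr 1
      refine Finset.sum_congr rfl fun n _ => ?_
      rw [hu]
      show ee (g.eval n) = ee (f.eval ((n + k : ℕ) : ℝ)) * (starRingEnd ℂ) (ee (f.eval n))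
      rw [ee_conj, ← ee_add, hg]
      congr 1
      rw [Polynomial.eval_sub, Polynomial.taylor_eval]
      push_cast
      ring

/-- For a totally ergodic invertible measure preserving transformation `S` and `g ∈ L²`
whose spectral measure has no rational atoms (equivalently `E[g|I_S] = 0` and
`E[g|K_rat(S)] = 0`), the polynomial correlation averages vanish for every `h ≥ 1`,
where `p ∈ ℤ[x]` has degree at least `2`. -/
theorem polynomial_correlations_vanish {X : Type*} [MeasurableSpace X]
    (μ : Measure X) [IsProbabilityMeasure μ] (S : X ≃ᵐ X)
    (hS : MeasurePreserving S μ μ)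
    (hte : ∀ m : ℕ, 0 < m → Ergodic ((⇑S)^[m]) μ)
    (g : X → ℂ) (hg : MemLp g 2 μ)
    (ν : Measure ℝ) [IsFiniteMeasure ν] (hsupp : ν (Set.Ico (0 : ℝ) 1)ᶜ = 0)
    (hcoeff : ∀ n : ℤ, ∫ x : ℝ, Complex.exp (-2 * Real.pi * Complex.I * n * (x : ℂ)) ∂ν =
      ∫ x, g ((S.toEquiv ^ n) x) * (starRingEnd ℂ) (g x) ∂μ)
    (hrat : ν {x : ℝ | ∃ q : ℚ, (q : ℝ) = x} = 0)
    (p : Polynomial ℤ) (hdeg : 2 ≤ p.natDegree) :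
    ∀ h : ℕ, 0 < h → Tendsto (fun N : ℕ =>
        (1 / (N : ℂ)) * ∑ n ∈ Finset.range N,
          ∫ x, g ((S.toEquiv ^ (p.eval ((n + 1 + h : ℕ) : ℤ))) x) *
            (starRingEnd ℂ) (g ((S.toEquiv ^ (p.eval ((n + 1 : ℕ) : ℤ))) x)) ∂μ)
      atTop (nhds 0) := by
  intro h hh
  -- measure preserving powers
  have hS1 : MeasurePreserving (⇑S.toEquiv) μ μ := by
    rw [MeasurableEquiv.coe_toEquiv]; exact hS
  have hS2 : MeasurePreserving (⇑S.toEquiv⁻¹) μ μ := hS.symm S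
  have hE1 : MeasurableEmbedding (⇑S.toEquiv) := by
    rw [MeasurableEquiv.coe_toEquiv]; exact S.measurableEmbedding
  have hE2 : MeasurableEmbedding (⇑S.toEquiv⁻¹) := S.symm.measurableEmbedding
  have hMP : ∀ k : ℤ, MeasurePreserving (⇑(S.toEquiv ^ k)) μ μ ∧
      MeasurableEmbedding (⇑(S.toEquiv ^ k)) := by
    intro k
    induction k using Int.induction_on with
    | zero =>
      rw [zpow_zero]
      exact ⟨by rw [Equiv.Perm.coe_one]; exact MeasurePreserving.id μ,
        by rw [Equiv.Perm.coe_one]; exact MeasurableEmbedding.id⟩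
    | succ i hi =>
      rw [zpow_add_one, Equiv.Perm.coe_mul]
      exact ⟨hi.1.comp hS1, hi.2.comp hE1⟩
    | pred i hi =>
      rw [show (-(i:ℤ) - 1) = (-(i:ℤ)) - 1 from rfl, zpow_sub_one, Equiv.Perm.coe_mul]
      exact ⟨hi.1.comp hS2, hi.2.comp hE2⟩
  -- key exponent polynomial
  set M : ℕ → ℤ := fun j => p.eval ((j:ℤ) + h) - p.eval (j:ℤ) with hM
  set r : ℕ → ℝ := fun j => -((M j : ℤ) : ℝ) with hr
  have hee : ∀ (m : ℤ) (x : ℝ), ee (-((m:ℝ)) * x)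
      = Complex.exp (-2 * Real.pi * Complex.I * (m:ℂ) * (x:ℂ)) := by
    intro m x
    rw [ee]; congr 1; push_cast; ring
  set c : ℕ → ℂ := fun j => ∫ x : ℝ, ee (r j * x) ∂ν with hc
  -- rewrite each summand as c (n+1)
  have key : ∀ n : ℕ, (∫ x, g ((S.toEquiv ^ (p.eval ((n + 1 + h : ℕ) : ℤ))) x) *
        (starRingEnd ℂ) (g ((S.toEquiv ^ (p.eval ((n + 1 : ℕ) : ℤ))) x)) ∂μ) = c (n+1) := by
    intro n
    set A : ℤ := p.eval ((n + 1 + h : ℕ) : ℤ) with hA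
    set B : ℤ := p.eval ((n + 1 : ℕ) : ℤ) with hB
    have hAB : A - B = M (n+1) := by
      rw [hA, hB, hM]
      simp only []
      congr 2 <;> push_cast <;> ring
    have hxy : ∀ x, (S.toEquiv ^ (A - B)) ((S.toEquiv ^ B) x) = (S.toEquiv ^ A) x := by
      intro x
      rw [← Equiv.Perm.mul_apply, ← zpow_add, sub_add_cancel]
    have step1 : (∫ x, g ((S.toEquiv ^ A) x) * (starRingEnd ℂ) (g ((S.toEquiv ^ B) x)) ∂μ)
        = ∫ x, (fun y => g ((S.toEquiv ^ (A - B)) y) * (starRingEnd ℂ) (g y)) ((S.toEquiv ^ B) x) ∂μ := by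
      refine integral_congr_ae (ae_of_all _ fun x => ?_)
      simp only []
      rw [hxy]
    have step2 : (∫ x, (fun y => g ((S.toEquiv ^ (A - B)) y) * (starRingEnd ℂ) (g y)) ((S.toEquiv ^ B) x) ∂μ)
        = ∫ y, g ((S.toEquiv ^ (A - B)) y) * (starRingEnd ℂ) (g y) ∂μ :=
      (hMP B).1.integral_comp (hMP B).2 (fun y => g ((S.toEquiv ^ (A - B)) y) * (starRingEnd ℂ) (g y))
    have step3 : (∫ y, g ((S.toEquiv ^ (A - B)) y) * (starRingEnd ℂ) (g y) ∂μ)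
        = ∫ x : ℝ, Complex.exp (-2 * Real.pi * Complex.I * ((A - B : ℤ):ℂ) * (x : ℂ)) ∂ν :=
      (hcoeff (A - B)).symm
    have step4 : (∫ x : ℝ, Complex.exp (-2 * Real.pi * Complex.I * ((A - B : ℤ):ℂ) * (x : ℂ)) ∂ν)
        = c (n+1) := by
      rw [hc]
      simp only []
      refine integral_congr_ae (ae_of_all _ fun x => ?_)
      rw [hr]
      simp only []
      rw [hee (M (n+1)) x, hAB]
    rw [step1, step2, step3, step4]
  -- reduce to limit of (1/N) * sum c(n+1)
  have htarget : (fun N : ℕ => (1 / (N : ℂ)) * ∑ n ∈ Finset.range N,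
      ∫ x, g ((S.toEquiv ^ (p.eval ((n + 1 + h : ℕ) : ℤ))) x) *
        (starRingEnd ℂ) (g ((S.toEquiv ^ (p.eval ((n + 1 : ℕ) : ℤ))) x)) ∂μ)
      = fun N : ℕ => (1 / (N : ℂ)) * ∑ n ∈ range N, c (n+1) := by
    funext N
    congr 1
    exact Finset.sum_congr rfl fun n _ => key n
  rw [htarget]
  -- bound on c
  set M0 : ℝ := (ν Set.univ).toReal with hM0
  have hcont : ∀ ρ : ℝ, Continuous fun x : ℝ => ee (ρ * x) := by
    intro ρ
    unfold ee
    fun_prop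
  have hInt : ∀ ρ : ℝ, Integrable (fun x : ℝ => ee (ρ * x)) ν := by
    intro ρ
    refine Integrable.mono' (integrable_const 1) (hcont ρ).aestronglyMeasurable ?_
    exact ae_of_all _ fun x => le_of_eq (ee_norm _)
  have hcb : ∀ j, ‖c j‖ ≤ M0 := by
    intro j
    rw [hc]
    simp only []
    calc ‖∫ x : ℝ, ee (r j * x) ∂ν‖ ≤ ∫ x : ℝ, ‖ee (r j * x)‖ ∂ν :=
        norm_integral_le_integral_norm _
      _ = ∫ _x : ℝ, (1:ℝ) ∂ν := by
          refine integral_congr_ae (ae_of_all _ fun x => ?_)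
          exact ee_norm _
      _ = M0 := by rw [integral_const, smul_eq_mul, mul_one]; rfl
  -- main limit for unshifted sums
  have hmain : Tendsto (fun N : ℕ => (1 / (N:ℂ)) * ∑ n ∈ range N, c n) atTop (nhds 0) := by
    -- as an integral
    set F : ℕ → ℝ → ℂ := fun N x => (1 / (N:ℂ)) * ∑ n ∈ range N, ee (r n * x) with hF
    have hFeq : ∀ N : ℕ, (1 / (N:ℂ)) * ∑ n ∈ range N, c n = ∫ x : ℝ, F N x ∂ν := by
      intro N
      rw [hF]
      simp only []
      rw [MeasureTheory.integral_const_mul]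
      congr 1
      rw [integral_finset_sum (range N) (fun n _ => hInt (r n))]
    have hFmeas : ∀ N : ℕ, AEStronglyMeasurable (F N) ν := by
      intro N
      apply Continuous.aestronglyMeasurable
      rw [hF]
      apply continuous_const.mul
      exact continuous_finset_sum _ fun n _ => hcont (r n)
    have hFbound : ∀ N : ℕ, ∀ᵐ x ∂ν, ‖F N x‖ ≤ 1 := by
      intro N
      refine ae_of_all _ fun x => ?_
      rw [hF]
      simp only []
      rcases Nat.eq_zero_or_pos N with h0 | hpos
      · subst h0; simp
      · have hNpos : (0:ℝ) < N := by exact_mod_cast hpos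
        rw [norm_mul, norm_div, norm_one, Complex.norm_natCast]
        have hb : ‖∑ n ∈ range N, ee (r n * x)‖ ≤ N := by
          calc ‖∑ n ∈ range N, ee (r n * x)‖ ≤ ∑ n ∈ range N, ‖ee (r n * x)‖ :=
              norm_sum_le _ _
            _ = ∑ _n ∈ range N, (1:ℝ) := Finset.sum_congr rfl fun n _ => ee_norm _
            _ = N := by simp
        calc 1 / (N:ℝ) * ‖∑ n ∈ range N, ee (r n * x)‖ ≤ 1 / (N:ℝ) * N := by
              apply mul_le_mul_of_nonneg_left hb (by positivity)
          _ = 1 := by field_simp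
    have hae : ∀ᵐ x ∂ν, Irrational x := by
      rw [ae_iff]
      have hset : {x : ℝ | ¬ Irrational x} = {x : ℝ | ∃ q : ℚ, (q : ℝ) = x} := by
        ext x
        simp only [Set.mem_setOf_eq, Irrational, not_not, Set.mem_range]
      rw [hset]
      exact hrat
    have hlim : ∀ᵐ x ∂ν, Tendsto (fun N => F N x) atTop (nhds 0) := by
      filter_upwards [hae] with x hx
      -- the polynomial
      set d : ℕ := p.natDegree with hd
      set pR : ℝ[X] := p.map (Int.castRingHom ℝ) with hpR
      have hpRdeg : pR.natDegree = d := natDegree_map_eq_of_injective Int.cast_injective p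
      have hpne : p ≠ 0 := by
        intro h0
        rw [h0] at hd
        simp only [Polynomial.natDegree_zero] at hd
        omega
      have hlcne : p.coeff d ≠ 0 := by
        rw [hd]
        exact Polynomial.leadingCoeff_ne_zero.mpr hpne
      set qR : ℝ[X] := taylor (h:ℝ) pR - pR with hqR
      obtain ⟨hq1, hq2⟩ := taylor_diff pR d (by omega) hpRdeg (h:ℝ)
      have hpRc : pR.coeff d = ((p.coeff d : ℤ) : ℝ) := by
        rw [hpR, Polynomial.coeff_map]; rfl
      have hq2' : qR.coeff (d-1) = (d:ℝ) * ((p.coeff d : ℤ):ℝ) * (h:ℝ) := by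
        rw [hqR, hq2, hpRc]
      have hqne : qR.coeff (d-1) ≠ 0 := by
        rw [hq2']
        refine mul_ne_zero (mul_ne_zero ?_ ?_) ?_
        · exact_mod_cast (by omega : d ≠ 0)
        · exact_mod_cast hlcne
        · exact_mod_cast hh.ne'
      have hqdeg : qR.natDegree = d - 1 := le_antisymm hq1 (le_natDegree_of_ne_zero hqne)
      have hxne : -x ≠ 0 := neg_ne_zero.mpr hx.ne_zero
      set fx : ℝ[X] := Polynomial.C (-x) * qR with hfx
      have hfxdeg : fx.natDegree = d - 1 := by
        rw [hfx, Polynomial.natDegree_C_mul hxne, hqdeg]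
      have hfxlead : fx.leadingCoeff = -x * qR.coeff (d-1) := by
        rw [hfx, Polynomial.leadingCoeff_mul, Polynomial.leadingCoeff_C,
          Polynomial.leadingCoeff, hqdeg]
      have hfxirr : Irrational fx.leadingCoeff := by
        set D : ℤ := -((d:ℤ) * p.coeff d * (h:ℤ)) with hD
        have hDne : D ≠ 0 := by
          rw [hD]
          simp only [neg_ne_zero]
          refine mul_ne_zero (mul_ne_zero ?_ hlcne) ?_
          · exact_mod_cast (by omega : d ≠ 0)
          · exact_mod_cast hh.ne'
        have heq : fx.leadingCoeff = (D:ℝ) * x := by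
          rw [hfxlead, hq2', hD]
          push_cast
          ring
        rw [heq]
        exact hx.intCast_mul hDne
      have hweyl := weyl (d-1) (by omega) fx hfxdeg hfxirr
      apply hweyl.congr
      intro N
      congr 1
      refine Finset.sum_congr rfl fun n _ => ?_
      -- ee (fx.eval n) = ee (r n * x)
      have hqeval : qR.eval (n:ℝ) = ((M n : ℤ) : ℝ) := by
        rw [hqR, Polynomial.eval_sub, Polynomial.taylor_eval]
        have h1 : ((n:ℝ) + (h:ℝ)) = (((n:ℤ) + (h:ℤ) : ℤ) : ℝ) := by push_cast; ring
        have h2 : ((n:ℝ)) = (((n:ℤ) : ℤ) : ℝ) := by push_cast; ring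
        rw [hpR, h1, h2, Polynomial.eval_intCast_map, Polynomial.eval_intCast_map]
        rw [hM]
        push_cast
        simp only [eq_intCast]
      have : fx.eval (n:ℝ) = r n * x := by
        rw [hfx, Polynomial.eval_mul, Polynomial.eval_C, hqeval, hr]
        simp only []
        ring
      rw [this]
    have hlim' : ∀ᵐ x ∂ν, Tendsto (fun N => F N x) atTop (nhds ((fun _ : ℝ => (0:ℂ)) x)) := by
      filter_upwards [hlim] with x hx
      simpa using hx
    have hDCT := MeasureTheory.tendsto_integral_of_dominated_convergence
      (f := fun _ : ℝ => (0:ℂ)) (fun _ => (1:ℝ)) hFmeas (integrable_const 1) hFbound hlim'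
    have h0 : (∫ _x : ℝ, (0:ℂ) ∂ν) = 0 := integral_zero _ _
    rw [h0] at hDCT
    apply hDCT.congr
    intro N
    exact (hFeq N).symm
  -- shift
  have hdiff : Tendsto (fun N : ℕ => (1 / (N:ℂ)) *
      ((∑ n ∈ range N, c (n+1)) - ∑ n ∈ range N, c n)) atTop (nhds 0) := by
    rw [tendsto_zero_iff_norm_tendsto_zero]
    apply squeeze_zero (fun N => norm_nonneg _) (g := fun N : ℕ => 2 * M0 / N)
    · intro N
      rw [norm_mul, norm_div, norm_one, Complex.norm_natCast]
      have hb := sum_shift c M0 hcb 1 N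
      calc 1 / (N:ℝ) * ‖(∑ n ∈ range N, c (n+1)) - ∑ n ∈ range N, c n‖
          ≤ 1 / (N:ℝ) * (2 * 1 * M0) := by
            apply mul_le_mul_of_nonneg_left _ (by positivity)
            exact_mod_cast hb
        _ = 2 * M0 / N := by ring
    · exact tendsto_const_div_atTop_nhds_zero_nat _
  have := hmain.add hdiff
  rw [add_zero] at this
  apply this.congr
  intro N
  ring
end

section
/- Let (X, B, μ) be a probability space and T, S : X → X measure preserving transformations (not necessarily commuting). Then for every bounded nonnegative f ∈ L²(X, μ), ∫_X f · E[f | I_T] · E[f | I_S] dμ ≥ (∫_X f dμ)³. -/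
open MeasureTheory Filter

/-- The σ-algebra of sets invariant under a self-map `T`. -/
def invariantSigmaAlgebra {X : Type*} [m0 : MeasurableSpace X] (T : X → X) :
    MeasurableSpace X where
  MeasurableSet' s := MeasurableSet s ∧ T ⁻¹' s = s
  measurableSet_empty := ⟨MeasurableSet.empty, rfl⟩
  measurableSet_compl := fun s hs => ⟨hs.1.compl, by rw [Set.preimage_compl, hs.2]⟩
  measurableSet_iUnion := fun s hs =>
    ⟨MeasurableSet.iUnion fun i => (hs i).1, by
      simp only [Set.preimage_iUnion]
      exact Set.iUnion_congr fun i => (hs i).2⟩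

private lemma sq_integral_le' {X : Type*} [MeasurableSpace X] {μ : Measure X}
    [IsProbabilityMeasure μ] {u : X → ℝ} (hu : Integrable u μ)
    (hu2 : Integrable (fun x => u x ^ 2) μ) :
    (∫ x, u x ∂μ) ^ 2 ≤ ∫ x, u x ^ 2 ∂μ := by
  set c := ∫ x, u x ∂μ with hc
  have h0 : 0 ≤ ∫ x, (u x ^ 2 - 2 * c * u x + c ^ 2) ∂μ := by
    refine integral_nonneg fun x => ?_
    simp only [Pi.zero_apply]
    nlinarith [sq_nonneg (u x - c)]
  have h2 : ∫ x, (u x ^ 2 - 2 * c * u x + c ^ 2) ∂μ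
      = (∫ x, u x ^ 2 ∂μ) - 2 * c * c + c ^ 2 := by
    rw [integral_add (f := fun x => u x ^ 2 - 2 * c * u x) (g := fun _ => c ^ 2)
      (hu2.sub (hu.const_mul _)) (integrable_const _),
      integral_sub (f := fun x => u x ^ 2) (g := fun x => 2 * c * u x) hu2 (hu.const_mul _),
      integral_const_mul, integral_const]
    simp
    exact Or.inl hc.symm
  rw [h2] at h0
  nlinarith [h0]

private lemma quad_helper' {a b c : ℝ}
    (h : ∀ q : ℚ, 0 ≤ a * (q : ℝ) ^ 2 - 2 * b * (q : ℝ) + c) : b ^ 2 ≤ a * c := by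
  have hall : ∀ x : ℝ, 0 ≤ a * x ^ 2 - 2 * b * x + c := by
    have hcl : IsClosed {x : ℝ | 0 ≤ a * x ^ 2 - 2 * b * x + c} :=
      isClosed_le continuous_const (by fun_prop)
    have hsub : Set.range ((↑) : ℚ → ℝ) ⊆ {x : ℝ | 0 ≤ a * x ^ 2 - 2 * b * x + c} := by
      rintro _ ⟨q, rfl⟩; exact h q
    have h1 := closure_minimal hsub hcl
    rw [(Rat.denseRange_cast (𝕜 := ℝ)).closure_eq] at h1
    exact fun x => h1 (Set.mem_univ x)
  have hd : discrim a (-(2 * b)) c ≤ 0 :=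
    discrim_le_zero fun x => by nlinarith [hall x]
  rw [discrim] at hd
  nlinarith [hd]

private lemma integrable_of_bdd' {X : Type*} [MeasurableSpace X] {μ : Measure X}
    [IsFiniteMeasure μ] {φ : X → ℝ} {C : ℝ} (hm : AEStronglyMeasurable φ μ)
    (h : ∀ᵐ x ∂μ, |φ x| ≤ C) : Integrable φ μ :=
  (MemLp.of_bound hm C (by simpa [Real.norm_eq_abs] using h)).integrable le_rfl

private lemma integral_mul_condexp' {X : Type*} [m0 : MeasurableSpace X] {μ : Measure X}
    [IsProbabilityMeasure μ] {m : MeasurableSpace X} (hm : m ≤ m0)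
    {φ ψ : X → ℝ} (hφ : StronglyMeasurable[m] φ) (hφψ : Integrable (φ * ψ) μ)
    (hψ : Integrable ψ μ) :
    ∫ x, φ x * ψ x ∂μ = ∫ x, φ x * (μ[ψ|m]) x ∂μ := by
  have h1 := condExp_mul_of_stronglyMeasurable_left hφ hφψ hψ
  have h2 : ∫ x, (μ[φ * ψ|m]) x ∂μ = ∫ x, (φ * ψ) x ∂μ := integral_condExp hm
  replace h2 := h2.symm
  simp only [Pi.mul_apply] at h2
  rw [h2, integral_congr_ae h1]
  simp only [Pi.mul_apply]
private lemma tangent' {t m : ℝ} (ht : 0 ≤ t) (hm : 0 ≤ m) :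
    m * Real.sqrt m + 3 / 2 * Real.sqrt m * (t - m) ≤ Real.sqrt t * t := by
  have ha : Real.sqrt t ^ 2 = t := Real.sq_sqrt ht
  have hb : Real.sqrt m ^ 2 = m := Real.sq_sqrt hm
  have ha0 : 0 ≤ Real.sqrt t := Real.sqrt_nonneg _
  have hb0 : 0 ≤ Real.sqrt m := Real.sqrt_nonneg _
  nlinarith [mul_nonneg (sq_nonneg (Real.sqrt t - Real.sqrt m))
    (by linarith : (0:ℝ) ≤ 2 * Real.sqrt t + Real.sqrt m)]

private lemma chu' {X : Type*} {mA mB : MeasurableSpace X}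
    [m0 : MeasurableSpace X] {μ : Measure X} [IsProbabilityMeasure μ]
    (hmA : mA ≤ m0) (hmB : mB ≤ m0)
    {f : X → ℝ} (hfm : AEStronglyMeasurable f μ) {C : ℝ} (hC0 : 0 ≤ C)
    (hC : ∀ x, |f x| ≤ C) (hnonneg : ∀ x, 0 ≤ f x) :
    (∫ x, f x ∂μ) ^ 3 ≤ ∫ x, f x * (μ[f|mA]) x * (μ[f|mB]) x ∂μ := by
  have hfub : ∀ x, f x ≤ C := fun x => (abs_le.1 (hC x)).2
  have hfi : Integrable f μ := integrable_of_bdd' hfm (ae_of_all _ hC)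
  set m := ∫ x, f x ∂μ with hmdef
  have hm0 : 0 ≤ m := integral_nonneg hnonneg
  set gT := μ[f|mA] with hgT
  set gS := μ[f|mB] with hgS
  have hgT_sm : StronglyMeasurable[mA] gT := stronglyMeasurable_condExp
  have hgS_sm : StronglyMeasurable[mB] gS := stronglyMeasurable_condExp
  have hgT_int : Integrable gT μ := integrable_condExp
  have hgT_nn : 0 ≤ᵐ[μ] gT := condExp_nonneg (ae_of_all _ hnonneg)
  have hgS_nn : 0 ≤ᵐ[μ] gS := condExp_nonneg (ae_of_all _ hnonneg)
  have hgT_ub : ∀ᵐ x ∂μ, gT x ≤ C := by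
    have h1 : μ[f|mA] ≤ᵐ[μ] μ[(fun _ => C)|mA] :=
      condExp_mono hfi (integrable_const C) (ae_of_all _ hfub)
    rw [condExp_const hmA] at h1
    exact h1
  have hgS_ub : ∀ᵐ x ∂μ, gS x ≤ C := by
    have h1 : μ[f|mB] ≤ᵐ[μ] μ[(fun _ => C)|mB] :=
      condExp_mono hfi (integrable_const C) (ae_of_all _ hfub)
    rw [condExp_const hmB] at h1
    exact h1
  have hgT_abs : ∀ᵐ x ∂μ, |gT x| ≤ C := by
    filter_upwards [hgT_nn, hgT_ub] with x h1 h2; rwa [abs_of_nonneg h1]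
  have hgS_abs : ∀ᵐ x ∂μ, |gS x| ≤ C := by
    filter_upwards [hgS_nn, hgS_ub] with x h1 h2; rwa [abs_of_nonneg h1]
  have hgT_aesm : AEStronglyMeasurable gT μ := (hgT_sm.mono hmA).aestronglyMeasurable
  have hgS_aesm : AEStronglyMeasurable gS μ := (hgS_sm.mono hmB).aestronglyMeasurable
  set sq : X → ℝ := fun x => Real.sqrt (gT x) with hsqdef
  have hsq_sm : StronglyMeasurable[mA] sq :=
    Real.continuous_sqrt.comp_stronglyMeasurable hgT_sm
  have hsq_aesm : AEStronglyMeasurable sq μ := (hsq_sm.mono hmA).aestronglyMeasurable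
  have hsq_nn : ∀ x, 0 ≤ sq x := fun x => Real.sqrt_nonneg _
  have hsq_sq : ∀ᵐ x ∂μ, sq x ^ 2 = gT x := by
    filter_upwards [hgT_nn] with x hx
    exact Real.sq_sqrt hx
  have hsq_ub : ∀ᵐ x ∂μ, |sq x| ≤ Real.sqrt C := by
    filter_upwards [hgT_ub] with x hx
    rw [abs_of_nonneg (hsq_nn x)]
    exact Real.sqrt_le_sqrt hx
  have hfsq_int : Integrable (f * sq) μ := by
    refine integrable_of_bdd' (C := C * Real.sqrt C) (hfm.mul hsq_aesm) ?_
    filter_upwards [hsq_ub] with x hx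
    calc |(f * sq) x| = |f x| * |sq x| := abs_mul _ _
      _ ≤ C * Real.sqrt C := mul_le_mul (hC x) hx (abs_nonneg _) hC0
  have hfgT_int : Integrable (f * gT) μ := by
    refine integrable_of_bdd' (C := C * C) (hfm.mul hgT_aesm) ?_
    filter_upwards [hgT_abs] with x hx
    calc |(f * gT) x| = |f x| * |gT x| := abs_mul _ _
      _ ≤ C * C := mul_le_mul (hC x) hx (abs_nonneg _) hC0
  set u := μ[f * sq|mB] with hudef
  set k := μ[f * gT|mB] with hkdef
  have hu_int : Integrable u μ := integrable_condExp
  have hu_aesm : AEStronglyMeasurable u μ :=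
    (stronglyMeasurable_condExp.mono hmB).aestronglyMeasurable
  have hk_aesm : AEStronglyMeasurable k μ :=
    (stronglyMeasurable_condExp.mono hmB).aestronglyMeasurable
  have hu_nn : 0 ≤ᵐ[μ] u :=
    condExp_nonneg (ae_of_all _ fun x => mul_nonneg (hnonneg x) (hsq_nn x))
  have hk_nn : 0 ≤ᵐ[μ] k := by
    refine condExp_nonneg ?_
    filter_upwards [hgT_nn] with x hx
    exact mul_nonneg (hnonneg x) hx
  have hu_ub : ∀ᵐ x ∂μ, u x ≤ C * Real.sqrt C := by
    have h1 : μ[f * sq|mB] ≤ᵐ[μ] μ[(fun _ => C * Real.sqrt C)|mB] := by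
      refine condExp_mono hfsq_int (integrable_const _) ?_
      filter_upwards [hsq_ub] with x hx
      rw [abs_of_nonneg (hsq_nn x)] at hx
      calc (f * sq) x = f x * sq x := rfl
        _ ≤ C * Real.sqrt C := mul_le_mul (hfub x) hx (hsq_nn x) hC0
    rw [condExp_const hmB] at h1
    exact h1
  have hk_ub : ∀ᵐ x ∂μ, k x ≤ C * C := by
    have h1 : μ[f * gT|mB] ≤ᵐ[μ] μ[(fun _ => C * C)|mB] := by
      refine condExp_mono hfgT_int (integrable_const _) ?_
      filter_upwards [hgT_nn, hgT_ub] with x h1 h2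
      calc (f * gT) x = f x * gT x := rfl
        _ ≤ C * C := mul_le_mul (hfub x) h2 h1 hC0
    rw [condExp_const hmB] at h1
    exact h1
  -- conditional Cauchy–Schwarz
  have hkey : ∀ᵐ x ∂μ, u x ^ 2 ≤ gS x * k x := by
    have hq : ∀ q : ℚ, ∀ᵐ x ∂μ,
        0 ≤ gS x * (q : ℝ) ^ 2 - 2 * u x * (q : ℝ) + k x := by
      intro q
      have hptw : (fun x => f x * (sq x - (q : ℝ)) ^ 2)
          =ᵐ[μ] f * gT - (2 * (q : ℝ)) • (f * sq) + ((q : ℝ) ^ 2) • f := by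
        filter_upwards [hsq_sq] with x hx
        simp only [Pi.add_apply, Pi.sub_apply, Pi.smul_apply, Pi.mul_apply, smul_eq_mul]
        rw [← hx]
        ring
      have h1 : 0 ≤ᵐ[μ] μ[(fun x => f x * (sq x - (q : ℝ)) ^ 2)|mB] :=
        condExp_nonneg (ae_of_all _ fun x => mul_nonneg (hnonneg x) (sq_nonneg _))
      have h2 : μ[(fun x => f x * (sq x - (q : ℝ)) ^ 2)|mB]
          =ᵐ[μ] fun x => k x - 2 * (q : ℝ) * u x + (q : ℝ) ^ 2 * gS x := by
        refine (condExp_congr_ae hptw).trans ?_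
        have e1 := condExp_add (μ := μ) (m := mB)
          (hfgT_int.sub (hfsq_int.smul (2 * (q : ℝ)))) (hfi.smul ((q : ℝ) ^ 2))
        refine e1.trans ?_
        have e2 := condExp_sub (μ := μ) (m := mB) hfgT_int (hfsq_int.smul (2 * (q : ℝ)))
        have e3 := condExp_smul (μ := μ) (m := mB) (2 * (q : ℝ)) (f * sq)
        have e4 := condExp_smul (μ := μ) (m := mB) ((q : ℝ) ^ 2) f
        filter_upwards [e2, e3, e4] with x h2x h3x h4x
        simp only [Pi.add_apply, Pi.sub_apply, Pi.smul_apply, smul_eq_mul] at h2x h3x h4x ⊢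
        rw [h2x, h3x, h4x]
      filter_upwards [h1, h2] with x h1x h2x
      simp only [Pi.zero_apply] at h1x
      rw [h2x] at h1x
      linarith [h1x]
    have hall := (ae_all_iff).2 hq
    filter_upwards [hall] with x hx
    exact quad_helper' hx
  have hu2_int : Integrable (fun x => u x ^ 2) μ := by
    refine integrable_of_bdd' (C := (C * Real.sqrt C) ^ 2)
      ((continuous_pow 2).comp_aestronglyMeasurable hu_aesm) ?_
    filter_upwards [hu_nn, hu_ub] with x h1 h2
    simp only [Pi.zero_apply] at h1
    rw [abs_of_nonneg (sq_nonneg _)]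
    nlinarith
  have hgSk_int : Integrable (fun x => gS x * k x) μ := by
    refine integrable_of_bdd' (C := C * (C * C)) (hgS_aesm.mul hk_aesm) ?_
    filter_upwards [hgS_abs, hk_nn, hk_ub] with x h1 h2 h3
    simp only [Pi.zero_apply] at h2
    rw [abs_mul]
    refine mul_le_mul h1 ?_ (abs_nonneg _) hC0
    rw [abs_of_nonneg h2]
    exact h3
  have step2 : ∫ x, u x ^ 2 ∂μ ≤ ∫ x, gS x * k x ∂μ :=
    integral_mono_ae hu2_int hgSk_int hkey
  have step3 : ∫ x, gS x * k x ∂μ = ∫ x, f x * gT x * gS x ∂μ := by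
    have hint : Integrable (gS * (f * gT)) μ := by
      refine integrable_of_bdd' (C := C * (C * C)) (hgS_aesm.mul (hfm.mul hgT_aesm)) ?_
      filter_upwards [hgS_abs, hgT_abs] with x h1 h2
      calc |(gS * (f * gT)) x| = |gS x| * (|f x| * |gT x|) := by
            simp [Pi.mul_apply, abs_mul]
        _ ≤ C * (C * C) :=
            mul_le_mul h1 (mul_le_mul (hC x) h2 (abs_nonneg _) hC0)
              (mul_nonneg (abs_nonneg _) (abs_nonneg _)) hC0
    have h1 := integral_mul_condexp' hmB hgS_sm hint hfgT_int
    rw [← hkdef] at h1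
    rw [← h1]
    exact integral_congr_ae (ae_of_all _ fun x => by simp [Pi.mul_apply]; ring)
  have hu_eq : ∫ x, u x ∂μ = ∫ x, f x * sq x ∂μ := by
    have h1 : ∫ x, (μ[f * sq|mB]) x ∂μ = ∫ x, (f * sq) x ∂μ := integral_condExp hmB
    rw [← hudef] at h1
    exact h1
  have step5 : ∫ x, f x * sq x ∂μ = ∫ x, sq x * gT x ∂μ := by
    have hint : Integrable (sq * f) μ := by
      refine integrable_of_bdd' (C := Real.sqrt C * C) (hsq_aesm.mul hfm) ?_
      filter_upwards [hsq_ub] with x hx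
      calc |(sq * f) x| = |sq x| * |f x| := abs_mul _ _
        _ ≤ Real.sqrt C * C := mul_le_mul hx (hC x) (abs_nonneg _) (Real.sqrt_nonneg _)
    have h1 := integral_mul_condexp' hmA hsq_sm hint hfi
    rw [← hgT] at h1
    rw [← h1]
    exact integral_congr_ae (ae_of_all _ fun x => mul_comm (f x) (sq x))
  have hgTint_eq : ∫ x, gT x ∂μ = m := by
    have h1 : ∫ x, (μ[f|mA]) x ∂μ = ∫ x, f x ∂μ := integral_condExp hmA
    rw [← hgT] at h1
    rw [h1]
  have hsqgT_int : Integrable (fun x => sq x * gT x) μ := by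
    refine integrable_of_bdd' (C := Real.sqrt C * C) (hsq_aesm.mul hgT_aesm) ?_
    filter_upwards [hsq_ub, hgT_abs] with x h1 h2
    rw [abs_mul]
    exact mul_le_mul h1 h2 (abs_nonneg _) (Real.sqrt_nonneg _)
  have step6 : m * Real.sqrt m ≤ ∫ x, sq x * gT x ∂μ := by
    have hrhs_int : Integrable
        (fun x => m * Real.sqrt m + 3 / 2 * Real.sqrt m * (gT x - m)) μ :=
      (integrable_const _).add ((hgT_int.sub (integrable_const m)).const_mul _)
    have hptw : ∀ᵐ x ∂μ,
        m * Real.sqrt m + 3 / 2 * Real.sqrt m * (gT x - m) ≤ sq x * gT x := by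
      filter_upwards [hgT_nn] with x hx
      exact tangent' hx hm0
    have h6 := integral_mono_ae hrhs_int hsqgT_int hptw
    have hzero : ∫ x, (gT x - m) ∂μ = 0 := by
      rw [integral_sub hgT_int (integrable_const m), integral_const, hgTint_eq]
      simp
    have hsum : ∫ x, (m * Real.sqrt m + 3 / 2 * Real.sqrt m * (gT x - m)) ∂μ
        = m * Real.sqrt m := by
      rw [integral_add (f := fun _ => m * Real.sqrt m)
        (g := fun x => 3 / 2 * Real.sqrt m * (gT x - m)) (integrable_const _)
        ((hgT_int.sub (integrable_const m)).const_mul _),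
        integral_const, integral_const_mul, hzero]
      simp
    rw [hsum] at h6
    exact h6
  have h7 : m * Real.sqrt m ≤ ∫ x, u x ∂μ := by
    rw [hu_eq, step5]; exact step6
  have h8 : (m * Real.sqrt m) ^ 2 ≤ (∫ x, u x ∂μ) ^ 2 :=
    pow_le_pow_left₀ (mul_nonneg hm0 (Real.sqrt_nonneg _)) h7 2
  have h9 := sq_integral_le' hu_int hu2_int
  have h10 : (m * Real.sqrt m) ^ 2 = m ^ 3 := by
    rw [mul_pow, Real.sq_sqrt hm0]
    ring
  calc m ^ 3 = (m * Real.sqrt m) ^ 2 := h10.symm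
    _ ≤ (∫ x, u x ∂μ) ^ 2 := h8
    _ ≤ ∫ x, u x ^ 2 ∂μ := h9
    _ ≤ ∫ x, gS x * k x ∂μ := step2
    _ = ∫ x, f x * gT x * gS x ∂μ := step3

/-- Chu's triple-correlation lower bound: for measure preserving `T, S` (not necessarily
commuting) and bounded nonnegative `f ∈ L²`,
`∫ f · E[f|I_T] · E[f|I_S] dμ ≥ (∫ f dμ)³`. -/
theorem triple_correlation_lower_bound {X : Type*} [MeasurableSpace X]
    (μ : Measure X) [IsProbabilityMeasure μ] (T S : X → X)
    (hT : MeasurePreserving T μ μ) (hS : MeasurePreserving S μ μ)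
    (f : X → ℝ) (hf : MemLp f 2 μ) (hbdd : ∃ C : ℝ, ∀ x, |f x| ≤ C)
    (hnonneg : ∀ x, 0 ≤ f x) :
    (∫ x, f x ∂μ) ^ 3 ≤
      ∫ x, f x * (μ[f|invariantSigmaAlgebra T]) x * (μ[f|invariantSigmaAlgebra S]) x ∂μ := by
  obtain ⟨C₀, hC₀⟩ := hbdd
  have hmA : invariantSigmaAlgebra T ≤ ‹MeasurableSpace X› := fun s hs => hs.1
  have hmB : invariantSigmaAlgebra S ≤ ‹MeasurableSpace X› := fun s hs => hs.1
  exact chu' hmA hmB hf.aestronglyMeasurable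
    (le_max_right C₀ 0) (fun x => le_trans (hC₀ x) (le_max_left _ _)) hnonneg
end
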